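/- If x₁ and x₂ are both complex-balanced steady states of the same mass-action system, then the vector (ln x₂ − ln x₁) (componentwise logarithm) is orthogonal to every reaction vector y' − y; in particular ln x₂ − ln x₁ ∈ S^⊥ where S is the stoichiometric subspace. (It suffices to prove orthogonality to each reaction vector assuming the classical equilibrium description.) -/

import Mathlib

open Classical in
lemma balance_transport {n : ℕ} {R : Type*} [Fintype R]
    (src tgt : R → EuclideanSpace ℝ (Fin n)) (F : R → ℝ)
    (hb : ∀ y, ∑ r, (if src r = y then F r else 0) = ∑ r, (if tgt r = y then F r else 0))
    (h : EuclideanSpace ℝ (Fin n) → ℝ) :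
    ∑ r, F r * h (src r) = ∑ r, F r * h (tgt r) := by
  classical
  set C := (Finset.univ.image src) ∪ (Finset.univ.image tgt) with hC
  have hsrc : ∀ r : R, src r ∈ C := fun r => Finset.mem_union_left _
    (Finset.mem_image.2 ⟨r, Finset.mem_univ r, rfl⟩)
  have htgt : ∀ r : R, tgt r ∈ C := fun r => Finset.mem_union_right _
    (Finset.mem_image.2 ⟨r, Finset.mem_univ r, rfl⟩)
  have e1 : ∑ r, F r * h (src r)
      = ∑ y ∈ C, (∑ r, (if src r = y then F r else 0)) * h y := by
    simp_rw [Finset.sum_mul, ite_mul, zero_mul]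
    rw [Finset.sum_comm]
    refine Finset.sum_congr rfl fun r _ => ?_
    rw [Finset.sum_ite_eq C (src r) (fun y => F r * h y), if_pos (hsrc r)]
  have e2 : ∑ r, F r * h (tgt r)
      = ∑ y ∈ C, (∑ r, (if tgt r = y then F r else 0)) * h y := by
    simp_rw [Finset.sum_mul, ite_mul, zero_mul]
    rw [Finset.sum_comm]
    refine Finset.sum_congr rfl fun r _ => ?_
    rw [Finset.sum_ite_eq C (tgt r) (fun y => F r * h y), if_pos (htgt r)]
  rw [e1, e2]
  exact Finset.sum_congr rfl fun y _ => by rw [hb y]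

open Classical in
theorem complex_balanced_log_difference_orthogonal
    {n : ℕ} {R : Type*} [Fintype R]
    (src tgt : R → EuclideanSpace ℝ (Fin n)) (k : R → ℝ) (hk : ∀ r, 0 < k r)
    (x₁ x₂ : EuclideanSpace ℝ (Fin n)) (hx₁ : ∀ i, 0 < x₁ i) (hx₂ : ∀ i, 0 < x₂ i)
    (hcb₁ : ∀ y : EuclideanSpace ℝ (Fin n),
      ∑ r, (if src r = y then k r * ∏ i, x₁ i ^ (src r i) else 0)
        = ∑ r, (if tgt r = y then k r * ∏ i, x₁ i ^ (src r i) else 0))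
    (hcb₂ : ∀ y : EuclideanSpace ℝ (Fin n),
      ∑ r, (if src r = y then k r * ∏ i, x₂ i ^ (src r i) else 0)
        = ∑ r, (if tgt r = y then k r * ∏ i, x₂ i ^ (src r i) else 0)) :
    (∀ r, ∑ i, (Real.log (x₂ i) - Real.log (x₁ i)) * (tgt r i - src r i) = 0) ∧
    (show EuclideanSpace ℝ (Fin n) from WithLp.toLp 2 (fun i => Real.log (x₂ i) - Real.log (x₁ i))) ∈
      (Submodule.span ℝ {v : EuclideanSpace ℝ (Fin n) | ∃ r, v = tgt r - src r})ᗮ := by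
  classical
  set μ : Fin n → ℝ := fun i => Real.log (x₂ i) - Real.log (x₁ i) with hμ
  set g : EuclideanSpace ℝ (Fin n) → ℝ := fun y => ∑ i, μ i * y i with hg
  set a : R → ℝ := fun r => k r * ∏ i, x₁ i ^ (src r i) with ha
  have ha_pos : ∀ r, 0 < a r := fun r =>
    mul_pos (hk r) (Finset.prod_pos fun i _ => Real.rpow_pos_of_pos (hx₁ i) _)
  set b : R → ℝ := fun r => g (tgt r) - g (src r) with hb
  -- product formulas
  have hprod : ∀ (x : EuclideanSpace ℝ (Fin n)), (∀ i, 0 < x i) →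
      ∀ y : EuclideanSpace ℝ (Fin n),
      ∏ i, x i ^ (y i) = Real.exp (∑ i, Real.log (x i) * y i) := by
    intro x hx y
    rw [Real.exp_sum]
    exact Finset.prod_congr rfl fun i _ => Real.rpow_def_of_pos (hx i) _
  have hx2prod : ∀ r, k r * ∏ i, x₂ i ^ (src r i) = a r * Real.exp (g (src r)) := by
    intro r
    simp only [ha]
    rw [hprod x₂ hx₂, hprod x₁ hx₁, mul_assoc, ← Real.exp_add]
    congr 2
    rw [hg, ← Finset.sum_add_distrib]
    exact Finset.sum_congr rfl fun i _ => by simp [hμ]; ring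
  -- (B): ∑ a r * b r = 0
  have hB : ∑ r, a r * b r = 0 := by
    have := balance_transport src tgt a (hcb₁) g
    simp only [hb, mul_sub]
    rw [Finset.sum_sub_distrib, this, sub_self]
  -- (C): ∑ a r = ∑ a r * exp (-b r)
  have hC : ∑ r, a r = ∑ r, a r * Real.exp (-(b r)) := by
    have h := balance_transport src tgt (fun r => k r * ∏ i, x₂ i ^ (src r i)) hcb₂
      (fun y => Real.exp (-(g y)))
    simp only [hx2prod] at h
    calc ∑ r, a r = ∑ r, a r * Real.exp (g (src r)) * Real.exp (-(g (src r))) := by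
          refine Finset.sum_congr rfl fun r _ => ?_
          rw [mul_assoc, ← Real.exp_add, add_neg_cancel, Real.exp_zero, mul_one]
      _ = ∑ r, a r * Real.exp (g (src r)) * Real.exp (-(g (tgt r))) := h
      _ = ∑ r, a r * Real.exp (-(b r)) := by
          refine Finset.sum_congr rfl fun r _ => ?_
          rw [mul_assoc, ← Real.exp_add, hb]
          ring_nf
  -- combine: ∑ a r * (exp(-b r) - 1 + b r) = 0 with nonneg terms
  have hsum0 : ∑ r, a r * (Real.exp (-(b r)) - 1 + b r) = 0 := by
    simp only [mul_add, mul_sub, mul_one]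
    rw [Finset.sum_add_distrib, Finset.sum_sub_distrib, ← hC, sub_self, zero_add, hB]
  have hterm : ∀ r, b r = 0 := by
    intro r
    by_contra hne
    have hnonneg : ∀ s ∈ Finset.univ, 0 ≤ a s * (Real.exp (-(b s)) - 1 + b s) := by
      intro s _
      have : -(b s) + 1 ≤ Real.exp (-(b s)) := Real.add_one_le_exp _
      nlinarith [ha_pos s]
    have hzero := (Finset.sum_eq_zero_iff_of_nonneg hnonneg).1 hsum0 r (Finset.mem_univ r)
    have hlt : -(b r) + 1 < Real.exp (-(b r)) := Real.add_one_lt_exp (neg_ne_zero.2 hne)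
    nlinarith [ha_pos r]
  have hmain : ∀ r, ∑ i, μ i * (tgt r i - src r i) = 0 := by
    intro r
    have : ∑ i, μ i * (tgt r i - src r i) = b r := by
      simp only [hb, hg, mul_sub, Finset.sum_sub_distrib]
    rw [this, hterm r]
  refine ⟨hmain, ?_⟩
  rw [Submodule.mem_orthogonal]
  intro u hu
  induction hu using Submodule.span_induction with
  | mem v hv =>
      obtain ⟨r, rfl⟩ := hv
      have := hmain r
      simp only [PiLp.inner_apply, RCLike.inner_apply, conj_trivial]
      rw [← this]
      refine Finset.sum_congr rfl fun i _ => ?_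
      simp [hμ, mul_comm]
  | zero => simp
  | add v w _ _ hv hw => rw [inner_add_left, hv, hw, add_zero]
  | smul c v _ hv => rw [inner_smul_left, hv, mul_zero]
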